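/- With probability at least 1−δ, the weighted sampling estimate satisfies |w_S(Q) − w(Q)| ≤ (2W/s)·sqrt(|Q|·log(2/δ)), assuming all sampling probabilities p_i for i ∈ Q satisfy p_i < 1. -/

import Mathlib

open MeasureTheory ProbabilityTheory

private lemma exp_neg_le_quad {u : ℝ} (hu : 0 ≤ u) : Real.exp (-u) ≤ 1 - u + u ^ 2 := by
  have h1 := Real.add_one_le_exp u
  have h2 := Real.exp_pos (-u)
  have h3 : Real.exp (-u) * Real.exp u = 1 := by
    rw [← Real.exp_add]; simp
  nlinarith [mul_le_mul_of_nonneg_left h1 h2.le, sq_nonneg u, mul_nonneg (mul_nonneg hu hu) hu]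

private lemma bernoulli_mgf_bound {p x : ℝ} (hp0 : 0 ≤ p) (hp1 : p ≤ 1) :
    (1 - p) + p * Real.exp x ≤ Real.exp (p * x + x ^ 2) := by
  rcases le_or_gt x 0 with hx | hx
  · have hex : Real.exp x ≤ 1 + x + x ^ 2 := by
      have h := exp_neg_le_quad (neg_nonneg.mpr hx)
      rw [neg_neg] at h; nlinarith [h]
    have h1 : (1 - p) + p * Real.exp x ≤ Real.exp (p * (Real.exp x - 1)) := by
      have := Real.add_one_le_exp (p * (Real.exp x - 1))
      nlinarith
    refine h1.trans (Real.exp_le_exp.mpr ?_)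
    nlinarith [sq_nonneg x]
  · have hq : Real.exp (-x) ≤ 1 - x + x ^ 2 := exp_neg_le_quad hx.le
    have hinv : Real.exp x * Real.exp (-x) = 1 := by rw [← Real.exp_add]; simp
    have h1 : (1 - p) + p * Real.exp x ≤
        Real.exp x * Real.exp ((1 - p) * (Real.exp (-x) - 1)) := by
      have h := Real.add_one_le_exp ((1 - p) * (Real.exp (-x) - 1))
      have hid : (1 - p) + p * Real.exp x =
          Real.exp x * (1 + (1 - p) * (Real.exp (-x) - 1)) := by
        have := hinv; nlinarith [hinv]
      rw [hid]
      exact mul_le_mul_of_nonneg_left (by linarith) (Real.exp_pos x).le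
    rw [← Real.exp_add] at h1
    refine h1.trans (Real.exp_le_exp.mpr ?_)
    nlinarith [hq, sq_nonneg x]

private lemma mgf_indicator_le {Ω : Type*} [MeasurableSpace Ω] (μ : Measure Ω)
    [IsProbabilityMeasure μ] (χ : Ω → ℝ) (hmeas : Measurable χ)
    (hval : ∀ ω, χ ω = 0 ∨ χ ω = 1) (p : ℝ) (hmean : ∫ ω, χ ω ∂μ = p)
    (hp0 : 0 ≤ p) (hp1 : p ≤ 1) (c t : ℝ) :
    mgf (fun ω => c * χ ω - c * p) μ t ≤ Real.exp (t ^ 2 * c ^ 2) := by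
  have hχint : Integrable χ μ := by
    refine ⟨hmeas.aestronglyMeasurable, HasFiniteIntegral.of_bounded (C := 1) ?_⟩
    filter_upwards with ω
    rcases hval ω with h | h <;> simp [h]
  have hptw : ∀ ω, Real.exp (t * (c * χ ω - c * p)) =
      Real.exp (-(t * c * p)) * (1 + (Real.exp (t * c) - 1) * χ ω) := by
    intro ω
    rcases hval ω with h | h <;> simp only [h, mul_zero, mul_one, add_zero]
    · congr 1; ring
    · have h2 : (1 : ℝ) + (Real.exp (t * c) - 1) = Real.exp (t * c) := by ring
      rw [h2, ← Real.exp_add]; congr 1; ring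
  have hmgf : mgf (fun ω => c * χ ω - c * p) μ t =
      Real.exp (-(t * c * p)) * (1 + (Real.exp (t * c) - 1) * p) := by
    rw [mgf]
    simp only [hptw]
    rw [integral_const_mul, integral_add (integrable_const 1) (hχint.const_mul _),
      integral_const_mul, hmean]
    simp
  rw [hmgf]
  have hb : (1 - p) + p * Real.exp (t * c) ≤ Real.exp (p * (t * c) + (t * c) ^ 2) :=
    bernoulli_mgf_bound hp0 hp1
  calc Real.exp (-(t * c * p)) * (1 + (Real.exp (t * c) - 1) * p)
      = Real.exp (-(t * c * p)) * ((1 - p) + p * Real.exp (t * c)) := by ring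
    _ ≤ Real.exp (-(t * c * p)) * Real.exp (p * (t * c) + (t * c) ^ 2) :=
        mul_le_mul_of_nonneg_left hb (Real.exp_pos _).le
    _ = Real.exp (t ^ 2 * c ^ 2) := by rw [← Real.exp_add]; ring_nf

/-- With probability at least `1 − δ`, the weighted sampling estimate satisfies
`|w_S(Q) − w(Q)| ≤ (2W/s)·√(|Q|·log(2/δ))`, assuming all sampling
probabilities `pᵢ` for `i ∈ Q` satisfy `pᵢ < 1`.  Here `pᵢ = min(1, s|gᵢ|/W)`,
`W = Σᵢ |gᵢ|`, `χ i` is the `{0,1}`-valued independent indicator of `i ∈ S`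
with mean `pᵢ`, `w_S(Q) = Σ_{i ∈ Q} (gᵢ/pᵢ)·χ i` and `w(Q) = Σ_{i ∈ Q} gᵢ`. -/
theorem weighted_sampling_concentration {Ω : Type*} [MeasurableSpace Ω]
    (μ : Measure Ω) [IsProbabilityMeasure μ] {n : ℕ}
    (g : Fin n → ℝ) (s W δ : ℝ) (hs : 0 < s) (hW : W = ∑ i, |g i|)
    (hWpos : 0 < W) (hδ0 : 0 < δ) (hδ1 : δ < 1)
    (p : Fin n → ℝ) (hp : ∀ i, p i = min 1 (s * |g i| / W))
    (χ : Fin n → Ω → ℝ) (hmeas : ∀ i, Measurable (χ i))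
    (hind : iIndepFun χ μ)
    (hval : ∀ i, ∀ ω, χ i ω = 0 ∨ χ i ω = 1)
    (hmean : ∀ i, ∫ ω, χ i ω ∂μ = p i)
    (Q : Finset (Fin n)) (hQ : ∀ i ∈ Q, p i < 1) :
    ENNReal.ofReal (1 - δ) ≤
      μ {ω | |(∑ i ∈ Q, g i / p i * χ i ω) - ∑ i ∈ Q, g i| ≤
        (2 * W / s) * Real.sqrt (Q.card * Real.log (2 / δ))} := by
  classical
  have hBpos : 0 < W / s := div_pos hWpos hs
  set B := W / s with hB
  have hLpos : 0 < Real.log (2 / δ) := Real.log_pos (by rw [lt_div_iff₀ hδ0]; linarith)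
  set L := Real.log (2 / δ) with hLdef
  rcases Finset.eq_empty_or_nonempty Q with rfl | hQne
  · simp only [Finset.sum_empty, sub_zero, abs_zero, Finset.card_empty, Nat.cast_zero,
      zero_mul, Real.sqrt_zero, mul_zero, le_refl, Set.setOf_true]
    rw [measure_univ]
    exact ENNReal.ofReal_le_one.mpr (by linarith)
  have hkpos : 0 < (Q.card : ℝ) := Nat.cast_pos.mpr (Finset.card_pos.mpr hQne)
  set k := (Q.card : ℝ) with hk
  set ε := 2 * B * Real.sqrt (k * L) with hε
  have hεpos : 0 < ε := by
    apply mul_pos (by linarith)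
    exact Real.sqrt_pos.mpr (mul_pos hkpos hLpos)
  set lam := ε / (2 * k * B ^ 2) with hlam
  have hlampos : 0 < lam := div_pos hεpos (by positivity)
  have hp0 : ∀ i, 0 ≤ p i := fun i => by
    rw [hp i]; exact le_min zero_le_one (by positivity)
  have hp1 : ∀ i, p i ≤ 1 := fun i => by rw [hp i]; exact min_le_left _ _
  have hpeq : ∀ i ∈ Q, p i = s * |g i| / W := by
    intro i hi
    have h := hQ i hi
    rw [hp i] at h ⊢
    rcases min_cases 1 (s * |g i| / W) with ⟨h1, _⟩ | ⟨h1, _⟩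
    · rw [h1] at h; exact absurd h (lt_irrefl _)
    · exact h1
  have hcp : ∀ i ∈ Q, g i / p i * p i = g i := by
    intro i hi
    by_cases hgi : g i = 0
    · simp [hgi]
    · have hpi : p i ≠ 0 := by
        rw [hpeq i hi]
        exact (div_pos (mul_pos hs (abs_pos.mpr hgi)) hWpos).ne'
      field_simp
  have hcB : ∀ i ∈ Q, |g i / p i| ≤ B := by
    intro i hi
    by_cases hgi : g i = 0
    · simp [hgi, hBpos.le]
    · have hgpos : 0 < |g i| := abs_pos.mpr hgi
      rw [hpeq i hi]
      rw [abs_div, abs_of_pos (by positivity : (0:ℝ) < s * |g i| / W)]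
      have heq : |g i| / (s * |g i| / W) = W / s := by
        field_simp
      rw [heq, hB]
  set X : Fin n → Ω → ℝ := fun i ω => g i / p i * χ i ω - g i with hX
  have hXmeas : ∀ i, Measurable (X i) := fun i => ((hmeas i).const_mul _).sub_const _
  have hXind : iIndepFun X μ :=
    hind.comp (fun i y => g i / p i * y - g i)
      (fun i => (measurable_id.const_mul _).sub_const _)
  have hXint : ∀ t : ℝ, ∀ i, Integrable (fun ω => Real.exp (t * X i ω)) μ := by
    intro t i
    refine ⟨(((hXmeas i).const_mul t).exp).aestronglyMeasurable,
      HasFiniteIntegral.of_bounded (C := Real.exp (|t| * (|g i / p i| + |g i|))) ?_⟩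
    filter_upwards with ω
    rw [Real.norm_eq_abs, Real.abs_exp]
    apply Real.exp_le_exp.mpr
    have hχb : |χ i ω| ≤ 1 := by rcases hval i ω with h | h <;> simp [h]
    have hXb : |X i ω| ≤ |g i / p i| + |g i| := by
      simp only [hX]
      refine (abs_sub _ _).trans ?_
      rw [abs_mul]
      nlinarith [abs_nonneg (g i / p i), abs_nonneg (χ i ω)]
    calc t * X i ω ≤ |t * X i ω| := le_abs_self _
      _ = |t| * |X i ω| := abs_mul _ _
      _ ≤ |t| * (|g i / p i| + |g i|) :=
          mul_le_mul_of_nonneg_left hXb (abs_nonneg t)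
  have hmgfsum : ∀ t : ℝ, mgf (∑ i ∈ Q, X i) μ t ≤ Real.exp (k * (t ^ 2 * B ^ 2)) := by
    intro t
    rw [hXind.mgf_sum hXmeas Q]
    calc ∏ i ∈ Q, mgf (X i) μ t ≤ ∏ _i ∈ Q, Real.exp (t ^ 2 * B ^ 2) := by
          refine Finset.prod_le_prod (fun i _ => mgf_nonneg) ?_
          intro i hi
          have hXeq : X i = fun ω => g i / p i * χ i ω - g i / p i * p i := by
            funext ω; simp only [hX]; rw [hcp i hi]
          rw [hXeq]
          refine (mgf_indicator_le μ (χ i) (hmeas i) (hval i) (p i) (hmean i) (hp0 i)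
            (hp1 i) (g i / p i) t).trans (Real.exp_le_exp.mpr ?_)
          have h1 := hcB i hi
          have h2 : (g i / p i) ^ 2 ≤ B ^ 2 := by
            rw [← sq_abs (g i / p i)]
            exact pow_le_pow_left₀ (abs_nonneg _) h1 2
          exact mul_le_mul_of_nonneg_left h2 (sq_nonneg t)
      _ = Real.exp (k * (t ^ 2 * B ^ 2)) := by
          rw [Finset.prod_const, ← Real.exp_nat_mul]
  have hεsq : ε ^ 2 = 4 * B ^ 2 * (k * L) := by
    rw [hε, mul_pow, mul_pow, Real.sq_sqrt (mul_pos hkpos hLpos).le]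
    ring
  have hexp : -lam * ε + k * (lam ^ 2 * B ^ 2) = -L := by
    rw [hlam]
    have hkne : k ≠ 0 := hkpos.ne'
    have hBne : B ≠ 0 := hBpos.ne'
    field_simp
    nlinarith [hεsq, sq_nonneg ε, hkpos, hBpos]
  have hexpδ : Real.exp (-L) = δ / 2 := by
    rw [Real.exp_neg, hLdef, Real.exp_log (by positivity), inv_div]
  have hup : (μ {ω | ε ≤ (∑ i ∈ Q, X i) ω}).toReal ≤ δ / 2 := by
    refine (measure_ge_le_exp_mul_mgf ε hlampos.le
      (hXind.integrable_exp_mul_sum hXmeas (fun i _ => hXint lam i))).trans ?_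
    calc Real.exp (-lam * ε) * mgf (∑ i ∈ Q, X i) μ lam
        ≤ Real.exp (-lam * ε) * Real.exp (k * (lam ^ 2 * B ^ 2)) :=
          mul_le_mul_of_nonneg_left (hmgfsum lam) (Real.exp_pos _).le
      _ = δ / 2 := by rw [← Real.exp_add, hexp, hexpδ]
  have hlo : (μ {ω | (∑ i ∈ Q, X i) ω ≤ -ε}).toReal ≤ δ / 2 := by
    refine (measure_le_le_exp_mul_mgf (-ε) (neg_nonpos.mpr hlampos.le)
      (hXind.integrable_exp_mul_sum hXmeas (fun i _ => hXint (-lam) i))).trans ?_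
    calc Real.exp (-(-lam) * -ε) * mgf (∑ i ∈ Q, X i) μ (-lam)
        ≤ Real.exp (-(-lam) * -ε) * Real.exp (k * ((-lam) ^ 2 * B ^ 2)) :=
          mul_le_mul_of_nonneg_left (hmgfsum (-lam)) (Real.exp_pos _).le
      _ = δ / 2 := by
          rw [← Real.exp_add]
          have h2 : -(-lam) * -ε + k * ((-lam) ^ 2 * B ^ 2) = -L := by
            rw [← hexp]; ring
          rw [h2, hexpδ]
  have hsetEq : {ω | |(∑ i ∈ Q, g i / p i * χ i ω) - ∑ i ∈ Q, g i| ≤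
        (2 * W / s) * Real.sqrt (↑Q.card * Real.log (2 / δ))} =
      {ω | |(∑ i ∈ Q, X i) ω| ≤ ε} := by
    have hεeq : (2 * W / s) * Real.sqrt (k * L) = ε := by
      rw [hε, hB]; ring
    ext ω
    simp only [Set.mem_setOf_eq, Finset.sum_apply, hX, Finset.sum_sub_distrib, hεeq]
    rw [← hεeq, hk, hLdef]
  rw [hsetEq]
  have hZmeas : Measurable (∑ i ∈ Q, X i) := by
    have h1 : (∑ i ∈ Q, X i) = fun ω => ∑ i ∈ Q, X i ω := by
      funext ω; exact Finset.sum_apply ω Q X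
    rw [h1]
    exact Finset.measurable_sum Q (fun i _ => hXmeas i)
  have hA : MeasurableSet {ω | |(∑ i ∈ Q, X i) ω| ≤ ε} :=
    measurableSet_le hZmeas.abs measurable_const
  have hcompl : μ {ω | |(∑ i ∈ Q, X i) ω| ≤ ε}ᶜ ≤ ENNReal.ofReal δ := by
    have hsub : {ω | |(∑ i ∈ Q, X i) ω| ≤ ε}ᶜ ⊆
        {ω | ε ≤ (∑ i ∈ Q, X i) ω} ∪ {ω | (∑ i ∈ Q, X i) ω ≤ -ε} := by
      intro ω hω
      simp only [Set.mem_compl_iff, Set.mem_setOf_eq, not_le] at hω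
      simp only [Set.mem_union, Set.mem_setOf_eq]
      rcases lt_abs.mp hω with h | h
      · exact Or.inl h.le
      · exact Or.inr (by linarith)
    refine (measure_mono hsub).trans ((measure_union_le _ _).trans ?_)
    have h1 : μ {ω | ε ≤ (∑ i ∈ Q, X i) ω} ≤ ENNReal.ofReal (δ / 2) := by
      rw [← ENNReal.ofReal_toReal (measure_ne_top μ _)]
      exact ENNReal.ofReal_le_ofReal hup
    have h2 : μ {ω | (∑ i ∈ Q, X i) ω ≤ -ε} ≤ ENNReal.ofReal (δ / 2) := by
      rw [← ENNReal.ofReal_toReal (measure_ne_top μ _)]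
      exact ENNReal.ofReal_le_ofReal hlo
    calc μ {ω | ε ≤ (∑ i ∈ Q, X i) ω} + μ {ω | (∑ i ∈ Q, X i) ω ≤ -ε}
        ≤ ENNReal.ofReal (δ / 2) + ENNReal.ofReal (δ / 2) := add_le_add h1 h2
      _ = ENNReal.ofReal δ := by
          rw [← ENNReal.ofReal_add (by positivity) (by positivity)]
          norm_num
  have huniv : (1 : ENNReal) ≤ μ {ω | |(∑ i ∈ Q, X i) ω| ≤ ε} +
      μ {ω | |(∑ i ∈ Q, X i) ω| ≤ ε}ᶜ := by
    calc (1 : ENNReal) = μ Set.univ := (measure_univ).symm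
      _ = μ ({ω | |(∑ i ∈ Q, X i) ω| ≤ ε} ∪ {ω | |(∑ i ∈ Q, X i) ω| ≤ ε}ᶜ) := by
          rw [Set.union_compl_self]
      _ ≤ _ := measure_union_le _ _
  rw [← ENNReal.add_le_add_iff_right ENNReal.ofReal_ne_top]
  calc ENNReal.ofReal (1 - δ) + ENNReal.ofReal δ = 1 := by
        rw [← ENNReal.ofReal_add (by linarith) hδ0.le]
        norm_num
    _ ≤ μ {ω | |(∑ i ∈ Q, X i) ω| ≤ ε} + μ {ω | |(∑ i ∈ Q, X i) ω| ≤ ε}ᶜ := huniv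
    _ ≤ μ {ω | |(∑ i ∈ Q, X i) ω| ≤ ε} + ENNReal.ofReal δ := add_le_add le_rfl hcompl
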